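/- Let N ≥ 3, s ∈ (1/2, 1), and set q = 2N/(N−2s). Let (u_n) be a sequence of measurable functions on ℝ^N that is bounded both in L²(ℝ^N) and in L^q(ℝ^N). Let w : ℝ^N → ℝ be measurable with |w(x)| ≤ C e^{−α|x|} for almost every x, for some constants C, α > 0, and let (x_n) ⊂ ℝ^N with |x_n| → ∞. Then ∫_{ℝ^N} w(x − x_n)·u_n(x)/|x|² dx → 0 as n → ∞. -/

import Mathlib

open MeasureTheory Filter Topology
open scoped ENNReal

section AuxLemmas

open Metric Set

variable {E : Type*} [NormedAddCommGroup E] [NormedSpace ℝ E] [FiniteDimensional ℝ E]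
  [MeasurableSpace E] [BorelSpace E]

lemma aux_ball_rpow_finite {β R : ℝ} (μ : Measure E) [μ.IsAddHaarMeasure]
    (hβ0 : 0 < β) (hβN : β < Module.finrank ℝ E) (hR : 0 < R) :
    ∫⁻ x : E in closedBall 0 R, ENNReal.ofReal (‖x‖ ^ (-β)) ∂μ < ⊤ := by
  set ν := μ.restrict (closedBall (0:E) R) with hν
  have hmeas : AEMeasurable (fun x : E => ‖x‖ ^ (-β)) ν := by fun_prop
  have hnn : 0 ≤ᶠ[ae ν] fun x : E => ‖x‖ ^ (-β) := by
    filter_upwards with x using Real.rpow_nonneg (norm_nonneg x) _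
  have hrw := lintegral_eq_lintegral_meas_le ν hnn hmeas
  rw [show ∫⁻ x : E in closedBall 0 R, ENNReal.ofReal (‖x‖ ^ (-β)) ∂μ
      = ∫⁻ x : E, ENNReal.ofReal (‖x‖ ^ (-β)) ∂ν from rfl, hrw]
  have hsub : ∀ t : ℝ, 1 < t → {a : E | t ≤ ‖a‖ ^ (-β)} ⊆ closedBall 0 (t ^ (-β⁻¹)) := by
    intro t ht a ha
    simp only [mem_setOf_eq] at ha
    have hna : (0:ℝ) < ‖a‖ := by
      rcases eq_or_lt_of_le (norm_nonneg a) with h | h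
      · exfalso
        rw [← h, Real.zero_rpow (neg_ne_zero.2 hβ0.ne')] at ha
        linarith
      · exact h
    have h2 : (‖a‖ ^ (-β)) ^ (-β⁻¹) ≤ (t : ℝ) ^ (-β⁻¹) :=
      Real.rpow_le_rpow_of_nonpos (by linarith) ha (neg_nonpos.2 (by positivity))
    rw [← Real.rpow_mul hna.le] at h2
    have : -β * -β⁻¹ = 1 := by field_simp
    rw [this, Real.rpow_one] at h2
    simpa [mem_closedBall, dist_zero_right] using h2
  calc ∫⁻ t in Ioi (0:ℝ), ν {a | t ≤ ‖a‖ ^ (-β)}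
      ≤ ∫⁻ t in Ioc (0:ℝ) 1 ∪ Ioi 1, ν {a | t ≤ ‖a‖ ^ (-β)} :=
        lintegral_mono_set Ioi_subset_Ioc_union_Ioi
    _ ≤ (∫⁻ t in Ioc (0:ℝ) 1, ν {a | t ≤ ‖a‖ ^ (-β)}) +
        ∫⁻ t in Ioi (1:ℝ), ν {a | t ≤ ‖a‖ ^ (-β)} := lintegral_union_le _ _ _
    _ < ⊤ := by
        refine ENNReal.add_lt_top.2 ⟨?_, ?_⟩
        · calc ∫⁻ t in Ioc (0:ℝ) 1, ν {a | t ≤ ‖a‖ ^ (-β)}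
              ≤ ∫⁻ _t in Ioc (0:ℝ) 1, μ (closedBall (0:E) R) := by
                refine setLIntegral_mono' measurableSet_Ioc fun t _ => ?_
                calc ν {a | t ≤ ‖a‖ ^ (-β)} ≤ ν univ := measure_mono (subset_univ _)
                  _ = μ (closedBall (0:E) R) := by
                      rw [hν, Measure.restrict_apply_univ]
            _ = μ (closedBall (0:E) R) * volume (Ioc (0:ℝ) 1) := by
                rw [setLIntegral_const]
            _ < ⊤ := ENNReal.mul_lt_top measure_closedBall_lt_top (by simp)
        · have hbound : ∀ t ∈ Ioi (1:ℝ), ν {a | t ≤ ‖a‖ ^ (-β)}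
              ≤ ENNReal.ofReal (t ^ (-((Module.finrank ℝ E : ℝ) / β))) * μ (ball (0:E) 1) := by
            intro t ht
            have ht1 : (1:ℝ) < t := ht
            calc ν {a | t ≤ ‖a‖ ^ (-β)} ≤ μ {a | t ≤ ‖a‖ ^ (-β)} :=
                  Measure.restrict_le_self _
              _ ≤ μ (closedBall 0 (t ^ (-β⁻¹))) := measure_mono (hsub t ht1)
              _ = ENNReal.ofReal ((t ^ (-β⁻¹)) ^ Module.finrank ℝ E) * μ (ball 0 1) :=
                  Measure.addHaar_closedBall μ _ (by positivity)
              _ = ENNReal.ofReal (t ^ (-((Module.finrank ℝ E : ℝ) / β))) * μ (ball (0:E) 1) := by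
                  congr 1
                  rw [← Real.rpow_natCast (t ^ (-β⁻¹)) (Module.finrank ℝ E),
                    ← Real.rpow_mul (by positivity)]
                  ring_nf
          calc ∫⁻ t in Ioi (1:ℝ), ν {a | t ≤ ‖a‖ ^ (-β)}
              ≤ ∫⁻ t in Ioi (1:ℝ),
                  ENNReal.ofReal (t ^ (-((Module.finrank ℝ E : ℝ) / β))) * μ (ball (0:E) 1) :=
                setLIntegral_mono' measurableSet_Ioi hbound
            _ = (∫⁻ t in Ioi (1:ℝ), ENNReal.ofReal (t ^ (-((Module.finrank ℝ E : ℝ) / β))))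
                  * μ (ball (0:E) 1) := lintegral_mul_const' _ _ measure_ball_lt_top.ne
            _ < ⊤ := by
                refine ENNReal.mul_lt_top ?_ measure_ball_lt_top
                refine IntegrableOn.setLIntegral_lt_top ?_
                refine integrableOn_Ioi_rpow_of_lt ?_ one_pos
                rw [neg_lt_neg_iff, lt_div_iff₀ hβ0, one_mul]
                exact hβN

lemma aux_exp_le_rpow {β r t : ℝ} (hβ : 0 < β) (hr : 0 < r) (ht : 0 ≤ t) :
    Real.exp (-β * t) ≤ (max 1 (r / β)) ^ r * (1 + t) ^ (-r) := by
  set c : ℝ := max 1 (r / β) with hc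
  have hc1 : (1:ℝ) ≤ c := le_max_left _ _
  have hcγ : 1 ≤ c * (β / r) := by
    calc (1:ℝ) = (r / β) * (β / r) := by field_simp
    _ ≤ c * (β / r) := by
        refine mul_le_mul_of_nonneg_right (le_max_right _ _) (by positivity)
  have h1 : 1 + t ≤ c * Real.exp ((β / r) * t) := by
    calc 1 + t ≤ c * (1 + (β / r) * t) := by nlinarith [mul_nonneg (div_nonneg hβ.le hr.le) ht]
      _ ≤ c * Real.exp ((β / r) * t) := by
          refine mul_le_mul_of_nonneg_left ?_ (by linarith)
          linarith [Real.add_one_le_exp ((β / r) * t)]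
  have h2 : (1 + t) ^ r ≤ c ^ r * Real.exp (β * t) := by
    calc (1 + t) ^ r ≤ (c * Real.exp ((β / r) * t)) ^ r :=
          Real.rpow_le_rpow (by linarith) h1 hr.le
      _ = c ^ r * Real.exp (β * t) := by
          rw [Real.mul_rpow (by linarith) (Real.exp_pos _).le, ← Real.exp_mul]
          congr 2
          field_simp
  rw [Real.rpow_neg (by linarith), neg_mul, Real.exp_neg]
  rw [← div_eq_mul_inv, inv_eq_one_div, div_le_div_iff₀ (Real.exp_pos _) (by positivity), one_mul]
  exact h2

lemma aux_exp_sq_finite (μ : Measure E) [μ.IsAddHaarMeasure] {C α : ℝ} (hα : 0 < α) :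
    ∫⁻ x : E, ENNReal.ofReal ((C * Real.exp (-α * ‖x‖)) ^ 2) ∂μ < ⊤ := by
  set r : ℝ := (Module.finrank ℝ E : ℝ) + 1 with hrdef
  have hr : 0 < r := by positivity
  set c : ℝ := max 1 (r / (2 * α)) with hc
  have hbd : ∀ x : E, ENNReal.ofReal ((C * Real.exp (-α * ‖x‖)) ^ 2)
      ≤ ENNReal.ofReal (C ^ 2 * c ^ r) * ENNReal.ofReal ((1 + ‖x‖) ^ (-r)) := by
    intro x
    rw [← ENNReal.ofReal_mul (by positivity)]
    refine ENNReal.ofReal_le_ofReal ?_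
    have : (C * Real.exp (-α * ‖x‖)) ^ 2 = C ^ 2 * Real.exp (-(2 * α) * ‖x‖) := by
      rw [mul_pow, sq (Real.exp _), ← Real.exp_add]
      ring_nf
    rw [this, mul_assoc]
    refine mul_le_mul_of_nonneg_left ?_ (by positivity)
    exact aux_exp_le_rpow (by positivity) hr (norm_nonneg x)
  calc ∫⁻ x : E, ENNReal.ofReal ((C * Real.exp (-α * ‖x‖)) ^ 2) ∂μ
      ≤ ∫⁻ x : E, ENNReal.ofReal (C ^ 2 * c ^ r) * ENNReal.ofReal ((1 + ‖x‖) ^ (-r)) ∂μ :=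
        lintegral_mono hbd
    _ = ENNReal.ofReal (C ^ 2 * c ^ r) * ∫⁻ x : E, ENNReal.ofReal ((1 + ‖x‖) ^ (-r)) ∂μ :=
        lintegral_const_mul' _ _ ENNReal.ofReal_ne_top
    _ < ⊤ := ENNReal.mul_lt_top ENNReal.ofReal_lt_top
        (finite_integral_one_add_norm (by simp [hrdef]))

end AuxLemmas

/-- Key estimate from Step 4 of the profile decomposition: if `(u_n)` is bounded in
`L²` and in `L^q` with `q = 2N/(N-2s)`, `s ∈ (1/2,1)`, `w` decays exponentially and
`|x_n| → ∞`, then `∫ w(x-x_n) u_n(x)/|x|² dx → 0`. -/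
theorem hardy_weight_translation_estimate {N : ℕ} (hN : 3 ≤ N)
    (s : ℝ) (hs : 1 / 2 < s) (hs1 : s < 1)
    (q : ℝ) (hq : q = 2 * (N : ℝ) / ((N : ℝ) - 2 * s))
    (un : ℕ → EuclideanSpace ℝ (Fin N) → ℝ) (hmeas : ∀ n, Measurable (un n))
    (hbdd : ∃ M : ℝ, ∀ n, eLpNorm (un n) 2 volume ≤ ENNReal.ofReal M ∧
      eLpNorm (un n) (ENNReal.ofReal q) volume ≤ ENNReal.ofReal M)
    (w : EuclideanSpace ℝ (Fin N) → ℝ) (hwmeas : Measurable w)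
    (C α : ℝ) (hC : 0 < C) (hα : 0 < α)
    (hw : ∀ᵐ x, |w x| ≤ C * Real.exp (-α * ‖x‖))
    (xn : ℕ → EuclideanSpace ℝ (Fin N))
    (hxn : Tendsto (fun n => ‖xn n‖) atTop atTop) :
    Tendsto (fun n => ∫ x, w (x - xn n) * un n x / ‖x‖ ^ 2) atTop (𝓝 0) := by
  classical
  obtain ⟨M, hM⟩ := hbdd
  have hNR : (3:ℝ) ≤ (N:ℝ) := by exact_mod_cast hN
  have hden : 0 < (N : ℝ) - 2 * s := by nlinarith
  have hq1 : 1 < q := by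
    rw [hq, lt_div_iff₀ hden]; nlinarith
  have hqpos : 0 < q := by linarith
  set q' : ℝ := Real.conjExponent q with hq'def
  have hconj : Real.HolderConjugate q q' := Real.HolderConjugate.conjExponent hq1
  have hq'pos : 0 < q' := hconj.symm.pos
  have hq'N : 2 * q' < (N : ℝ) := by
    have hqm1 : q - 1 = ((N:ℝ) + 2*s) / ((N:ℝ) - 2*s) := by
      rw [hq]; field_simp; ring
    have hne1 : (N:ℝ) - 2*s ≠ 0 := hden.ne'
    have hne2 : (N:ℝ) + 2*s ≠ 0 := by nlinarith
    have hq'eq : q' = 2 * (N:ℝ) / ((N:ℝ) + 2*s) := by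
      rw [hq'def, Real.conjExponent, hqm1, hq]
      field_simp
    rw [hq'eq, mul_div_assoc', div_lt_iff₀ (by nlinarith)]
    nlinarith
  -- basic objects
  set W : EuclideanSpace ℝ (Fin N) → ℝ≥0∞ :=
    fun x => ENNReal.ofReal (C * Real.exp (-α * ‖x‖)) with hWdef
  set V : ℕ → EuclideanSpace ℝ (Fin N) → ℝ≥0∞ :=
    fun n x => ENNReal.ofReal |un n x| with hVdef
  set P : EuclideanSpace ℝ (Fin N) → ℝ≥0∞ :=
    fun x => ENNReal.ofReal (‖x‖ ^ (-(2:ℝ))) with hPdef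
  have hWm : Measurable W := by fun_prop
  have hVm : ∀ n, Measurable (V n) := fun n => ((hmeas n).abs).ennreal_ofReal
  have hPm : Measurable P := by fun_prop
  set A : ℝ≥0∞ := ∫⁻ x, W x ^ (2:ℝ) with hAdef
  have hW2 : ∀ y, W y ^ (2:ℝ) = ENNReal.ofReal ((C * Real.exp (-α * ‖y‖)) ^ 2) := by
    intro y
    rw [hWdef, ENNReal.ofReal_rpow_of_nonneg (by positivity) (by norm_num),
      Real.rpow_two]
  have hAfin : A ≠ ⊤ := by
    rw [hAdef]
    have := aux_exp_sq_finite (E := EuclideanSpace ℝ (Fin N)) volume (C := C) hα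
    rw [show (∫⁻ x, W x ^ (2:ℝ)) = ∫⁻ x : EuclideanSpace ℝ (Fin N),
      ENNReal.ofReal ((C * Real.exp (-α * ‖x‖)) ^ 2) from lintegral_congr hW2]
    exact this.ne
  have htransA : ∀ c : EuclideanSpace ℝ (Fin N), ∫⁻ x, W (x - c) ^ (2:ℝ) = A :=
    fun c => (measurePreserving_sub_right volume c).lintegral_comp
      (f := fun y => W y ^ (2:ℝ)) (by fun_prop)
  have hconj2 : Real.HolderConjugate 2 2 := Real.HolderConjugate.two_two
  -- L² bound
  have hv2 : ∀ n, (∫⁻ x, V n x ^ (2:ℝ)) ^ (1/2 : ℝ) ≤ ENNReal.ofReal M := by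
    intro n
    have h := (hM n).1
    rw [eLpNorm_eq_lintegral_rpow_enorm_toReal two_ne_zero ENNReal.ofNat_ne_top] at h
    simpa [hVdef, ← ofReal_norm, Real.norm_eq_abs] using h
  -- L^q bound
  have hofq : (ENNReal.ofReal q) ≠ 0 := by
    simp only [ne_eq, ENNReal.ofReal_eq_zero, not_le]; linarith
  have hvq : ∀ n, (∫⁻ x, V n x ^ q) ^ (1/q : ℝ) ≤ ENNReal.ofReal M := by
    intro n
    have h := (hM n).2
    rw [eLpNorm_eq_lintegral_rpow_enorm_toReal hofq ENNReal.ofReal_ne_top] at h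
    rw [ENNReal.toReal_ofReal hqpos.le] at h
    simpa [hVdef, ← ofReal_norm, Real.norm_eq_abs] using h
  -- the main ENNReal quantity
  set I : ℕ → ℝ≥0∞ :=
    fun n => ∫⁻ x, ENNReal.ofReal ‖w (x - xn n) * un n x / ‖x‖ ^ 2‖ with hIdef
  set K : ℝ → ℝ≥0∞ := fun R =>
    (∫⁻ x in Metric.closedBall (0 : EuclideanSpace ℝ (Fin N)) R,
      ENNReal.ofReal (‖x‖ ^ (-(2*q')))) ^ (1/q' : ℝ) with hKdef
  have hKfin : ∀ R : ℝ, 0 < R → K R ≠ ⊤ := by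
    intro R hR
    refine (ENNReal.rpow_lt_top_of_nonneg (by positivity) ?_).ne
    refine (aux_ball_rpow_finite volume (by positivity) ?_ hR).ne
    rw [finrank_euclideanSpace_fin]
    exact hq'N
  have hPq : ∀ x : EuclideanSpace ℝ (Fin N), P x ^ (q' : ℝ) =
      ENNReal.ofReal (‖x‖ ^ (-(2*q'))) := by
    intro x
    rw [hPdef, ENNReal.ofReal_rpow_of_nonneg (Real.rpow_nonneg (norm_nonneg x) _) hq'pos.le,
      ← Real.rpow_mul (norm_nonneg x)]
    ring_nf
  -- the key estimate, for every n and every R > 0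
  have hmain : ∀ n, ∀ R : ℝ, 0 < R →
      I n ≤ ENNReal.ofReal (C * Real.exp (-α * (‖xn n‖ - R))) * (ENNReal.ofReal M * K R)
        + ENNReal.ofReal (R ^ (-(2:ℝ))) * (A ^ (1/2 : ℝ) * ENNReal.ofReal M) := by
    intro n R hR
    set c := xn n with hc
    have hwt : ∀ᵐ x : EuclideanSpace ℝ (Fin N),
        |w (x - c)| ≤ C * Real.exp (-α * ‖x - c‖) :=
      (measurePreserving_sub_right volume c).quasiMeasurePreserving.ae hw
    have hpt : ∀ᵐ x : EuclideanSpace ℝ (Fin N),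
        ENNReal.ofReal ‖w (x - c) * un n x / ‖x‖ ^ 2‖ ≤ W (x - c) * (V n x * P x) := by
      filter_upwards [hwt] with x hx
      rcases eq_or_ne x 0 with h0 | h0
      · subst h0
        simp [hPdef, Real.zero_rpow (by norm_num : (-(2:ℝ)) ≠ 0)]
      · have hx0 : (0:ℝ) < ‖x‖ := norm_pos_iff.2 h0
        have hexpand : ‖w (x - c) * un n x / ‖x‖ ^ 2‖
            = |w (x - c)| * (|un n x| * ‖x‖ ^ (-(2:ℝ))) := by
          rw [Real.norm_eq_abs, abs_div, abs_mul, abs_of_nonneg (by positivity : (0:ℝ) ≤ ‖x‖^2),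
            Real.rpow_neg (norm_nonneg x), Real.rpow_two, div_eq_mul_inv, mul_assoc]
        rw [hexpand, ENNReal.ofReal_mul (abs_nonneg _), ENNReal.ofReal_mul (abs_nonneg _)]
        exact mul_le_mul_left (ENNReal.ofReal_le_ofReal hx) _
    have hIle : I n ≤ ∫⁻ x, W (x - c) * (V n x * P x) := by
      rw [hIdef]
      exact lintegral_mono_ae hpt
    set S := Metric.closedBall (0 : EuclideanSpace ℝ (Fin N)) R with hSdef
    have hSm : MeasurableSet S := measurableSet_closedBall
    have hsplit : (∫⁻ x, W (x - c) * (V n x * P x))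
        = (∫⁻ x in S, W (x - c) * (V n x * P x))
          + ∫⁻ x in Sᶜ, W (x - c) * (V n x * P x) :=
      (lintegral_add_compl _ hSm).symm
    -- ball part
    have hball : (∫⁻ x in S, W (x - c) * (V n x * P x))
        ≤ ENNReal.ofReal (C * Real.exp (-α * (‖c‖ - R))) * (ENNReal.ofReal M * K R) := by
      have step1 : (∫⁻ x in S, W (x - c) * (V n x * P x))
          ≤ ∫⁻ x in S, ENNReal.ofReal (C * Real.exp (-α * (‖c‖ - R))) * (V n x * P x) := by
        refine setLIntegral_mono' hSm fun x hx => ?_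
        refine mul_le_mul_left (ENNReal.ofReal_le_ofReal ?_) _
        refine mul_le_mul_of_nonneg_left (Real.exp_le_exp.2 ?_) hC.le
        have h1 : ‖c‖ - ‖x‖ ≤ ‖x - c‖ := by
          rw [norm_sub_rev]
          exact norm_sub_norm_le c x
        have hxR : ‖x‖ ≤ R := mem_closedBall_zero_iff.1 hx
        nlinarith
      have step2 : (∫⁻ x in S, ENNReal.ofReal (C * Real.exp (-α * (‖c‖ - R))) * (V n x * P x))
          = ENNReal.ofReal (C * Real.exp (-α * (‖c‖ - R))) * ∫⁻ x in S, V n x * P x :=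
        lintegral_const_mul' _ _ ENNReal.ofReal_ne_top
      have step3 : (∫⁻ x in S, V n x * P x)
          ≤ (∫⁻ x in S, V n x ^ q) ^ (1/q : ℝ) * (∫⁻ x in S, P x ^ (q' : ℝ)) ^ (1/q' : ℝ) :=
        ENNReal.lintegral_mul_le_Lp_mul_Lq (volume.restrict S) hconj
          (hVm n).aemeasurable hPm.aemeasurable
      have step4 : (∫⁻ x in S, V n x ^ q) ^ (1/q : ℝ) ≤ ENNReal.ofReal M := by
        refine le_trans (ENNReal.rpow_le_rpow ?_ (by positivity)) (hvq n)
        exact setLIntegral_le_lintegral _ _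
      have step5 : (∫⁻ x in S, P x ^ (q' : ℝ)) ^ (1/q' : ℝ) = K R := by
        rw [hKdef]
        congr 1
        exact lintegral_congr fun x => hPq x
      calc (∫⁻ x in S, W (x - c) * (V n x * P x))
          ≤ ENNReal.ofReal (C * Real.exp (-α * (‖c‖ - R))) * ∫⁻ x in S, V n x * P x := by
            rw [← step2]; exact step1
        _ ≤ ENNReal.ofReal (C * Real.exp (-α * (‖c‖ - R)))
            * ((∫⁻ x in S, V n x ^ q) ^ (1/q : ℝ) * (∫⁻ x in S, P x ^ (q' : ℝ)) ^ (1/q' : ℝ)) :=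
            mul_le_mul_right step3 _
        _ ≤ ENNReal.ofReal (C * Real.exp (-α * (‖c‖ - R))) * (ENNReal.ofReal M * K R) := by
            refine mul_le_mul_right ?_ _
            rw [step5]
            exact mul_le_mul_left step4 _
    -- tail part
    have htail : (∫⁻ x in Sᶜ, W (x - c) * (V n x * P x))
        ≤ ENNReal.ofReal (R ^ (-(2:ℝ))) * (A ^ (1/2 : ℝ) * ENNReal.ofReal M) := by
      have step1 : (∫⁻ x in Sᶜ, W (x - c) * (V n x * P x))
          ≤ ∫⁻ x in Sᶜ, ENNReal.ofReal (R ^ (-(2:ℝ))) * (W (x - c) * V n x) := by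
        refine setLIntegral_mono' hSm.compl fun x hx => ?_
        have hxR : R ≤ ‖x‖ := by
          have : ¬ (dist x 0 ≤ R) := hx
          rw [dist_zero_right] at this
          linarith [not_le.1 this]
        have hPle : P x ≤ ENNReal.ofReal (R ^ (-(2:ℝ))) := by
          rw [hPdef]
          exact ENNReal.ofReal_le_ofReal
            (Real.rpow_le_rpow_of_nonpos hR hxR (by norm_num))
        calc W (x - c) * (V n x * P x) = (W (x - c) * V n x) * P x := by ring
          _ ≤ (W (x - c) * V n x) * ENNReal.ofReal (R ^ (-(2:ℝ))) := mul_le_mul_right hPle _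
          _ = ENNReal.ofReal (R ^ (-(2:ℝ))) * (W (x - c) * V n x) := by ring
      have step2 : (∫⁻ x in Sᶜ, ENNReal.ofReal (R ^ (-(2:ℝ))) * (W (x - c) * V n x))
          ≤ ENNReal.ofReal (R ^ (-(2:ℝ))) * ∫⁻ x, W (x - c) * V n x := by
        rw [lintegral_const_mul' _ _ ENNReal.ofReal_ne_top]
        exact mul_le_mul_right (lintegral_mono' Measure.restrict_le_self le_rfl) _
      have step3 : (∫⁻ x, W (x - c) * V n x)
          ≤ (∫⁻ x, W (x - c) ^ (2:ℝ)) ^ (1/2 : ℝ) * (∫⁻ x, V n x ^ (2:ℝ)) ^ (1/2 : ℝ) :=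
        ENNReal.lintegral_mul_le_Lp_mul_Lq volume hconj2
          (hWm.comp (measurable_id.sub_const c)).aemeasurable (hVm n).aemeasurable
      calc (∫⁻ x in Sᶜ, W (x - c) * (V n x * P x))
          ≤ ENNReal.ofReal (R ^ (-(2:ℝ))) * ∫⁻ x, W (x - c) * V n x := step1.trans step2
        _ ≤ ENNReal.ofReal (R ^ (-(2:ℝ)))
            * ((∫⁻ x, W (x - c) ^ (2:ℝ)) ^ (1/2 : ℝ) * (∫⁻ x, V n x ^ (2:ℝ)) ^ (1/2 : ℝ)) :=
            mul_le_mul_right step3 _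
        _ ≤ ENNReal.ofReal (R ^ (-(2:ℝ))) * (A ^ (1/2 : ℝ) * ENNReal.ofReal M) := by
            refine mul_le_mul_right ?_ _
            rw [htransA c]
            exact mul_le_mul_right (hv2 n) _
    calc I n ≤ ∫⁻ x, W (x - c) * (V n x * P x) := hIle
      _ = _ + _ := hsplit
      _ ≤ _ := add_le_add hball htail
  -- convergence of I to 0
  have key : Tendsto I atTop (𝓝 0) := by
    rw [ENNReal.tendsto_atTop_zero]
    intro ε hε
    set ε' : ℝ≥0∞ := min ε 1 with hε'def
    have hε'pos : 0 < ε' := lt_min hε one_pos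
    have hε'top : ε' ≠ ⊤ := ne_top_of_le_ne_top ENNReal.one_ne_top (min_le_right _ _)
    have hhalfpos : 0 < ε' / 2 := ENNReal.div_pos hε'pos.ne' ENNReal.ofNat_ne_top
    have hhalftop : ε' / 2 ≠ ⊤ := (ENNReal.div_lt_top hε'top (by norm_num)).ne
    set G : ℝ≥0∞ := A ^ (1/2 : ℝ) * ENNReal.ofReal M with hGdef
    have hGfin : G ≠ ⊤ :=
      ENNReal.mul_ne_top (ENNReal.rpow_lt_top_of_nonneg (by positivity) hAfin).ne
        ENNReal.ofReal_ne_top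
    obtain ⟨m, hm⟩ := ENNReal.exists_nat_gt (ENNReal.div_lt_top hGfin hhalfpos.ne').ne
    set R : ℝ := (m : ℝ) + 1 with hRdef
    have hRpos : 0 < R := by positivity
    have hR1 : (1:ℝ) ≤ R := by simp [hRdef]
    have htail_small : ENNReal.ofReal (R ^ (-(2:ℝ))) * G ≤ ε' / 2 := by
      have h1 : ENNReal.ofReal (R ^ (-(2:ℝ))) ≤ (ENNReal.ofReal R)⁻¹ := by
        rw [← ENNReal.ofReal_inv_of_pos hRpos]
        refine ENNReal.ofReal_le_ofReal ?_
        rw [Real.rpow_neg hRpos.le]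
        refine inv_anti₀ hRpos ?_
        calc R = R ^ (1:ℝ) := (Real.rpow_one R).symm
          _ ≤ R ^ (2:ℝ) := Real.rpow_le_rpow_of_exponent_le hR1 (by norm_num)
      have hmR : (m : ℝ≥0∞) ≤ ENNReal.ofReal R := by
        calc (m : ℝ≥0∞) = ENNReal.ofReal (m : ℝ) := (ENNReal.ofReal_natCast m).symm
          _ ≤ ENNReal.ofReal R := ENNReal.ofReal_le_ofReal (by rw [hRdef]; linarith)
      have hGlt : G < (m : ℝ≥0∞) * (ε' / 2) :=
        (ENNReal.div_lt_iff (Or.inl hhalfpos.ne') (Or.inl hhalftop)).1 hm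
      calc ENNReal.ofReal (R ^ (-(2:ℝ))) * G ≤ (ENNReal.ofReal R)⁻¹ * G :=
            mul_le_mul_left h1 _
        _ = G / ENNReal.ofReal R := by rw [div_eq_mul_inv, mul_comm]
        _ ≤ ε' / 2 := by
            rw [ENNReal.div_le_iff_le_mul (Or.inr hhalftop) (Or.inl ENNReal.ofReal_ne_top)]
            calc G ≤ (m : ℝ≥0∞) * (ε' / 2) := hGlt.le
              _ ≤ ENNReal.ofReal R * (ε' / 2) := mul_le_mul_left hmR _
              _ = ε' / 2 * ENNReal.ofReal R := mul_comm _ _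
    have hMK : ENNReal.ofReal M * K R ≠ ⊤ :=
      ENNReal.mul_ne_top ENNReal.ofReal_ne_top (hKfin R hRpos)
    have hhead : Tendsto
        (fun n => ENNReal.ofReal (C * Real.exp (-α * (‖xn n‖ - R))) * (ENNReal.ofReal M * K R))
        atTop (𝓝 0) := by
      have h1 : Tendsto (fun n => ‖xn n‖ - R) atTop atTop :=
        tendsto_atTop_add_const_right atTop (-R) hxn |>.congr fun n => by ring
      have h2 : Tendsto (fun n => -α * (‖xn n‖ - R)) atTop atBot :=
        (tendsto_const_mul_atBot_of_neg (by linarith)).2 h1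
      have h3 : Tendsto (fun n => C * Real.exp (-α * (‖xn n‖ - R))) atTop (𝓝 0) := by
        have := (Real.tendsto_exp_atBot.comp h2).const_mul C
        simpa using this
      have h4 := ENNReal.tendsto_ofReal h3
      have h5 := ENNReal.Tendsto.mul_const h4 (Or.inr hMK)
      simpa using h5
    obtain ⟨n₀, hn₀⟩ := eventually_atTop.1 (hhead.eventually (gt_mem_nhds hhalfpos))
    refine ⟨n₀, fun n hn => ?_⟩
    calc I n ≤ ENNReal.ofReal (C * Real.exp (-α * (‖xn n‖ - R))) * (ENNReal.ofReal M * K R)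
          + ENNReal.ofReal (R ^ (-(2:ℝ))) * (A ^ (1/2 : ℝ) * ENNReal.ofReal M) :=
        hmain n R hRpos
      _ ≤ ε' / 2 + ε' / 2 := add_le_add (hn₀ n hn).le htail_small
      _ = ε' := ENNReal.add_halves ε'
      _ ≤ ε := min_le_left _ _
  -- conclusion
  have habs : ∀ n, |∫ x, w (x - xn n) * un n x / ‖x‖ ^ 2| ≤ (I n).toReal := by
    intro n
    rw [← Real.norm_eq_abs]
    exact norm_integral_le_lintegral_norm _
  have htoReal : Tendsto (fun n => (I n).toReal) atTop (𝓝 0) := by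
    have := (ENNReal.tendsto_toReal (by simp)).comp key
    simpa [Function.comp_def] using this
  rw [tendsto_zero_iff_abs_tendsto_zero]
  exact squeeze_zero (fun n => abs_nonneg _) habs htoReal
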